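/- Let x, y ∈ ℝ^d ∖ {0} and suppose x(t), y(t) ∈ ℝ^d are families such that each coordinate x_i(t) = a_i t^{ξ_i} + o(t^{ξ_i}) and y_i(t) = b_i t^{υ_i} + o(t^{υ_i}) as t → ∞, with a_i, b_i ≠ 0 whenever ξ_i, υ_i > −∞. If the sets argmax_i ξ_i and argmax_i υ_i are disjoint, then the angle between x(t) and y(t) tends to π/2 as t → +∞, i.e., ⟨x(t), y(t)⟩ / (‖x(t)‖ ‖y(t)‖) → 0. -/

import Mathlib

open Asymptotics Filter

private lemma exists_max_exp {d : ℕ} (ξ : Fin d → WithBot ℝ) (h : ∃ i, ξ i ≠ ⊥) :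
    ∃ p : ℝ, (∀ j, ξ j ≤ (p : WithBot ℝ)) ∧ ∃ i, ξ i = (p : WithBot ℝ) := by
  obtain ⟨i₀, hi₀⟩ := h
  haveI : Nonempty (Fin d) := ⟨i₀⟩
  obtain ⟨i, -, hi⟩ := Finset.exists_mem_eq_sup' Finset.univ_nonempty ξ
  have hle : ∀ j, ξ j ≤ ξ i := fun j => hi ▸ Finset.le_sup' ξ (Finset.mem_univ j)
  have hne : ξ i ≠ ⊥ := fun hb => hi₀ (le_bot_iff.mp (hb ▸ hle i₀))
  obtain ⟨p, hp⟩ := WithBot.ne_bot_iff_exists.mp hne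
  exact ⟨p, fun j => hp ▸ hle j, i, hp.symm⟩

private lemma coord_lim {d : ℕ} (x : ℝ → Fin d → ℝ) (a : Fin d → ℝ) (ξ : Fin d → WithBot ℝ)
    (hxr : ∀ i, ∀ r : ℝ, ξ i = (r : WithBot ℝ) →
      a i ≠ 0 ∧ (fun t => x t i - a i * t ^ r) =o[atTop] fun t => t ^ r)
    (hx0 : ∀ i, ξ i = ⊥ → ∀ t, x t i = 0)
    (p : ℝ) (hp : ∀ j, ξ j ≤ (p : WithBot ℝ)) (i : Fin d) :
    Tendsto (fun t => x t i / t ^ p) atTop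
      (nhds (if ξ i = (p : WithBot ℝ) then a i else 0)) := by
  cases h : ξ i with
  | bot =>
      rw [if_neg (by simp)]
      have he : (fun t : ℝ => x t i / t ^ p) = fun t => (0 : ℝ) / t ^ p := by
        funext t; rw [hx0 i h t]
      rw [he]; simp
  | coe r =>
      obtain ⟨ha, ho⟩ := hxr i r h
      have hr : r ≤ p := by exact_mod_cast (h ▸ hp i)
      have h1 : Tendsto (fun t => x t i / t ^ r) atTop (nhds (a i)) := by
        have h2 := ho.tendsto_div_nhds_zero
        have h3 : Tendsto (fun t => (x t i - a i * t ^ r) / t ^ r + a i) atTop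
            (nhds (0 + a i)) := h2.add tendsto_const_nhds
        rw [zero_add] at h3
        refine h3.congr' ?_
        filter_upwards [eventually_gt_atTop 0] with t ht
        have hne : (t : ℝ) ^ r ≠ 0 := (Real.rpow_pos_of_pos ht r).ne'
        field_simp
        ring
      rcases eq_or_lt_of_le hr with heq | hlt
      · subst heq
        rw [if_pos rfl]
        exact h1
      · rw [if_neg (by exact_mod_cast hlt.ne)]
        have h4 : Tendsto (fun t : ℝ => t ^ (r - p)) atTop (nhds 0) := by
          have := tendsto_rpow_neg_atTop (y := p - r) (by linarith)
          simpa [neg_sub] using this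
        have h5 := h1.mul h4
        rw [mul_zero] at h5
        refine h5.congr' ?_
        filter_upwards [eventually_gt_atTop 0] with t ht
        have hne : (t : ℝ) ^ r ≠ 0 := (Real.rpow_pos_of_pos ht r).ne'
        have hnep : (t : ℝ) ^ p ≠ 0 := (Real.rpow_pos_of_pos ht p).ne'
        rw [Real.rpow_sub ht]
        field_simp

/-- If the families `x(t), y(t) ∈ ℝ^d` have coordinates
`x_i(t) = a_i t^{ξ_i} + o(t^{ξ_i})` and `y_i(t) = b_i t^{υ_i} + o(t^{υ_i})`
(with `a_i, b_i ≠ 0` for finite exponents, and coordinates with exponent `-∞`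
identically zero), and the argmax sets of the exponents `ξ` and `υ` are
disjoint, then the angle between `x(t)` and `y(t)` tends to `π/2`, i.e.
`⟨x(t), y(t)⟩ / (‖x(t)‖ ‖y(t)‖) → 0` as `t → +∞`. -/
theorem angle_tendsto_pi_div_two (d : ℕ) (x y : ℝ → Fin d → ℝ)
    (a b : Fin d → ℝ) (ξ υ : Fin d → WithBot ℝ)
    (hxr : ∀ i, ∀ r : ℝ, ξ i = (r : WithBot ℝ) →
      a i ≠ 0 ∧ (fun t => x t i - a i * t ^ r) =o[atTop] fun t => t ^ r)
    (hx0 : ∀ i, ξ i = ⊥ → ∀ t, x t i = 0)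
    (hyr : ∀ i, ∀ r : ℝ, υ i = (r : WithBot ℝ) →
      b i ≠ 0 ∧ (fun t => y t i - b i * t ^ r) =o[atTop] fun t => t ^ r)
    (hy0 : ∀ i, υ i = ⊥ → ∀ t, y t i = 0)
    (hxne : ∃ i, ξ i ≠ ⊥) (hyne : ∃ i, υ i ≠ ⊥)
    (hdisj : ∀ i, (∀ j, ξ j ≤ ξ i) → (∀ j, υ j ≤ υ i) → False) :
    Tendsto (fun t => (∑ i, x t i * y t i) /
        (Real.sqrt (∑ i, (x t i) ^ 2) * Real.sqrt (∑ i, (y t i) ^ 2)))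
      atTop (nhds 0) := by
  obtain ⟨p, hpmax, ip, hip⟩ := exists_max_exp ξ hxne
  obtain ⟨q, hqmax, iq, hiq⟩ := exists_max_exp υ hyne
  set L : Fin d → ℝ := fun i => if ξ i = (p : WithBot ℝ) then a i else 0 with hL
  set M : Fin d → ℝ := fun i => if υ i = (q : WithBot ℝ) then b i else 0 with hM
  have hX : ∀ i, Tendsto (fun t => x t i / t ^ p) atTop (nhds (L i)) :=
    fun i => coord_lim x a ξ hxr hx0 p hpmax i
  have hY : ∀ i, Tendsto (fun t => y t i / t ^ q) atTop (nhds (M i)) :=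
    fun i => coord_lim y b υ hyr hy0 q hqmax i
  -- norms
  have hSX : Tendsto (fun t => Real.sqrt (∑ i, (x t i / t ^ p) ^ 2)) atTop
      (nhds (Real.sqrt (∑ i, (L i) ^ 2))) := by
    apply (Real.continuous_sqrt.tendsto _).comp
    exact tendsto_finset_sum _ (fun i _ => (hX i).pow 2)
  have hSY : Tendsto (fun t => Real.sqrt (∑ i, (y t i / t ^ q) ^ 2)) atTop
      (nhds (Real.sqrt (∑ i, (M i) ^ 2))) := by
    apply (Real.continuous_sqrt.tendsto _).comp
    exact tendsto_finset_sum _ (fun i _ => (hY i).pow 2)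
  have hCpos : 0 < Real.sqrt (∑ i, (L i) ^ 2) := by
    apply Real.sqrt_pos.mpr
    apply Finset.sum_pos' (fun i _ => sq_nonneg _)
    refine ⟨ip, Finset.mem_univ _, ?_⟩
    have := (hxr ip p hip).1
    simp only [hL, if_pos hip]
    positivity
  have hDpos : 0 < Real.sqrt (∑ i, (M i) ^ 2) := by
    apply Real.sqrt_pos.mpr
    apply Finset.sum_pos' (fun i _ => sq_nonneg _)
    refine ⟨iq, Finset.mem_univ _, ?_⟩
    have := (hyr iq q hiq).1
    simp only [hM, if_pos hiq]
    positivity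
  -- inner product
  have hLM : ∀ i, L i * M i = 0 := by
    intro i
    by_cases h1 : ξ i = (p : WithBot ℝ)
    · by_cases h2 : υ i = (q : WithBot ℝ)
      · exact (hdisj i (fun j => le_of_le_of_eq (hpmax j) h1.symm)
          (fun j => le_of_le_of_eq (hqmax j) h2.symm)).elim
      · simp [hM, h2]
    · simp [hL, h1]
  have hI : Tendsto (fun t => ∑ i, (x t i / t ^ p) * (y t i / t ^ q)) atTop (nhds 0) := by
    have := tendsto_finset_sum (Finset.univ : Finset (Fin d))
      (fun i _ => (hX i).mul (hY i))
    simpa [hLM] using this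
  have key := hI.div (hSX.mul hSY) (ne_of_gt (mul_pos hCpos hDpos))
  rw [zero_div] at key
  refine key.congr' ?_
  filter_upwards [eventually_gt_atTop 0] with t ht
  have hup : (0 : ℝ) < t ^ p := Real.rpow_pos_of_pos ht p
  have huq : (0 : ℝ) < t ^ q := Real.rpow_pos_of_pos ht q
  have e1 : (∑ i, (x t i / t ^ p) * (y t i / t ^ q)) =
      (∑ i, x t i * y t i) / (t ^ p * t ^ q) := by
    rw [Finset.sum_div]
    exact Finset.sum_congr rfl fun i _ => by rw [div_mul_div_comm]
  have e2 : Real.sqrt (∑ i, (x t i / t ^ p) ^ 2) =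
      Real.sqrt (∑ i, (x t i) ^ 2) / t ^ p := by
    have : (∑ i, (x t i / t ^ p) ^ 2) = (∑ i, (x t i) ^ 2) / (t ^ p) ^ 2 := by
      rw [Finset.sum_div]
      exact Finset.sum_congr rfl fun i _ => by rw [div_pow]
    rw [this, Real.sqrt_div (by positivity), Real.sqrt_sq hup.le]
  have e3 : Real.sqrt (∑ i, (y t i / t ^ q) ^ 2) =
      Real.sqrt (∑ i, (y t i) ^ 2) / t ^ q := by
    have : (∑ i, (y t i / t ^ q) ^ 2) = (∑ i, (y t i) ^ 2) / (t ^ q) ^ 2 := by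
      rw [Finset.sum_div]
      exact Finset.sum_congr rfl fun i _ => by rw [div_pow]
    rw [this, Real.sqrt_div (by positivity), Real.sqrt_sq huq.le]
  simp only [Pi.div_apply]
  rw [e1, e2, e3, div_mul_div_comm]
  have hc : t ^ p * t ^ q ≠ 0 := by positivity
  rw [div_div_eq_mul_div, div_mul_cancel₀ _ hc]
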